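/- For any real numbers 0 < p ≤ q and any finite doubly-indexed family of complex numbers (c_{i,j}), one has (∑_i (∑_j |c_{i,j}|^p)^{q/p})^{1/q} ≤ (∑_j (∑_i |c_{i,j}|^q)^{p/q})^{1/p}. -/

import Mathlib

open Finset NNReal

/-- `ℓ^r` triangle inequality for a finite family of nonneg functions. -/
lemma nnreal_Lp_sum_le {ι κ : Type*} [Fintype ι] (s : Finset κ) (g : κ → ι → ℝ≥0)
    {r : ℝ} (hr : 1 ≤ r) :
    (∑ i, (∑ j ∈ s, g j i) ^ r) ^ (1 / r) ≤ ∑ j ∈ s, (∑ i, (g j i) ^ r) ^ (1 / r) := by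
  classical
  induction s using Finset.induction with
  | empty =>
      have hr0 : r ≠ 0 := by linarith
      have hr1 : 1 / r ≠ 0 := one_div_ne_zero hr0
      simp [NNReal.zero_rpow hr0, NNReal.zero_rpow hr1]
      exact Or.inr hr0
  | @insert a s hj ih =>
      calc (∑ i, (∑ j ∈ insert a s, g j i) ^ r) ^ (1 / r)
          = (∑ i, (g a i + ∑ j ∈ s, g j i) ^ r) ^ (1 / r) := by
            simp [Finset.sum_insert hj]
        _ ≤ (∑ i, (g a i) ^ r) ^ (1 / r) + (∑ i, (∑ j ∈ s, g j i) ^ r) ^ (1 / r) :=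
            NNReal.Lp_add_le _ _ _ hr
        _ ≤ (∑ i, (g a i) ^ r) ^ (1 / r) + ∑ j ∈ s, (∑ i, (g j i) ^ r) ^ (1 / r) := by
            exact add_le_add_right ih _
        _ = ∑ j ∈ insert a s, (∑ i, (g j i) ^ r) ^ (1 / r) := by
            rw [Finset.sum_insert hj]

theorem minkowski_mixed_norm {ι κ : Type*} [Fintype ι] [Fintype κ]
    (p q : ℝ) (hp : 0 < p) (hpq : p ≤ q) (c : ι → κ → ℂ) :
    (∑ i, (∑ j, ‖c i j‖ ^ p) ^ (q / p)) ^ (1 / q) ≤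
      (∑ j, (∑ i, ‖c i j‖ ^ q) ^ (p / q)) ^ (1 / p) := by
  have hq : 0 < q := hp.trans_le hpq
  set a : ι → κ → ℝ≥0 := fun i j => ‖c i j‖₊ with ha
  have habs : ∀ i j, ‖c i j‖ = (a i j : ℝ) := fun i j => rfl
  have key : (∑ i, (∑ j, a i j ^ p) ^ (q / p)) ^ (1 / q) ≤
      (∑ j, (∑ i, a i j ^ q) ^ (p / q)) ^ (1 / p) := by
    have hr : (1 : ℝ) ≤ q / p := (one_le_div hp).2 hpq
    have haux := nnreal_Lp_sum_le (ι := ι) Finset.univ (fun j i => a i j ^ p) hr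
    have h1r : 1 / (q / p) = p / q := by field_simp
    rw [h1r] at haux
    have heq : ∀ j, (∑ i, (a i j ^ p) ^ (q / p)) ^ (p / q)
        = (∑ i, a i j ^ q) ^ (p / q) := by
      intro j
      congr 1
      refine Finset.sum_congr rfl fun i _ => ?_
      rw [← NNReal.rpow_mul]
      congr 1
      field_simp
    simp only [heq] at haux
    calc (∑ i, (∑ j, a i j ^ p) ^ (q / p)) ^ (1 / q)
        = (((∑ i, (∑ j, a i j ^ p) ^ (q / p)) ^ (p / q)) : ℝ≥0) ^ (1 / p) := by
          rw [← NNReal.rpow_mul]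
          congr 1
          field_simp
      _ ≤ (∑ j, (∑ i, a i j ^ q) ^ (p / q)) ^ (1 / p) :=
          NNReal.rpow_le_rpow haux (by positivity)
  have := NNReal.coe_le_coe.2 key
  simpa [habs, NNReal.coe_rpow, NNReal.coe_sum] using this
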